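/- arXiv:2209.14728 — 9 statements merged into one kernel-verified Lean document; each statement's English description precedes it below -/
import Mathlib

section
/- In a Markov category C, an object X_π is a support of a state π : I → X (i.e., represents the functor C(X,-)/=_π-a.s.) if and only if there exists a section–retraction pair i : X_π → X, r : X → X_π with i ; r = id_{X_π}, such that for all f, g : X → Y, f =_π-a.s. g if and only if i ; f = i ; g. -/
open CategoryTheory MonoidalCategory

universe v u

class MarkovCategory (C : Type u) [Category.{v} C] [MonoidalCategory C] [SymmetricCategory C] where
  copy : ∀ X : C, X ⟶ X ⊗ X
  del : ∀ X : C, X ⟶ 𝟙_ C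
  copy_del_left : ∀ X : C, copy X ≫ (del X ▷ X) = (λ_ X).inv
  copy_del_right : ∀ X : C, copy X ≫ (X ◁ del X) = (ρ_ X).inv
  copy_assoc : ∀ X : C, copy X ≫ (copy X ▷ X) ≫ (α_ X X X).hom = copy X ≫ (X ◁ copy X)
  copy_comm : ∀ X : C, copy X ≫ (β_ X X).hom = copy X
  del_natural : ∀ {X Y : C} (f : X ⟶ Y), f ≫ del Y = del X
  copy_tensor : ∀ X Y : C, copy (X ⊗ Y) = (copy X ⊗ₘ copy Y) ≫ tensorμ X X Y Y
  del_tensor : ∀ X Y : C, del (X ⊗ Y) = (del X ⊗ₘ del Y) ≫ (λ_ (𝟙_ C)).hom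
  copy_unit : copy (𝟙_ C) = (λ_ (𝟙_ C)).inv
  del_unit : del (𝟙_ C) = 𝟙 (𝟙_ C)

namespace MarkovCategory

variable {C : Type u} [Category.{v} C] [MonoidalCategory C] [SymmetricCategory C] [_root_.MarkovCategory C]

/-- `f` is `π`-almost-surely equal to `g`. -/
def AsEq {X Y : C} (π : 𝟙_ C ⟶ X) (f g : X ⟶ Y) : Prop :=
  π ≫ copy X ≫ (X ◁ f) = π ≫ copy X ≫ (X ◁ g)

/-- `h` is a Bayesian inverse of `f` at the prior `π`. -/
def BayesInv {X Y : C} (π : 𝟙_ C ⟶ X) (f : X ⟶ Y) (h : Y ⟶ X) : Prop :=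
  π ≫ copy X ≫ (X ◁ f) = π ≫ f ≫ copy Y ≫ (h ▷ Y)

/-- Left marginal of a state on a tensor product. -/
def margL {X Y : C} (π : 𝟙_ C ⟶ X ⊗ Y) : 𝟙_ C ⟶ X :=
  π ≫ (X ◁ del Y) ≫ (ρ_ X).hom

/-- Right marginal of a state on a tensor product. -/
def margR {X Y : C} (π : 𝟙_ C ⟶ X ⊗ Y) : 𝟙_ C ⟶ Y :=
  π ≫ (del X ▷ Y) ≫ (λ_ Y).hom

end MarkovCategory

namespace MarkovCategory

variable {C : Type u} [Category.{v} C] [MonoidalCategory C] [SymmetricCategory C] [_root_.MarkovCategory C]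

lemma AsEq.comp {X Y Z : C} {π : 𝟙_ C ⟶ X} {f g : X ⟶ Y} (h : AsEq π f g) (k : Y ⟶ Z) :
    AsEq π (f ≫ k) (g ≫ k) := by
  unfold AsEq at *
  simp only [MonoidalCategory.whiskerLeft_comp]
  simpa [Category.assoc] using congrArg (· ≫ (X ◁ k)) h

/-- The covariant functor `Y ↦ C(X, Y)/=_π` of morphisms out of `X` modulo
`π`-almost-sure equality. -/
def QFunctor {X : C} (π : 𝟙_ C ⟶ X) : C ⥤ Type v where
  obj Y := Quot (fun f g : X ⟶ Y => AsEq π f g)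
  map k := TypeCat.ofHom (Quot.map (· ≫ k) (fun _ _ h => AsEq.comp h k))
  map_id Y := by
    ext q
    induction q using Quot.ind with
    | _ f => simp [Quot.map]
  map_comp k l := by
    ext q
    induction q using Quot.ind with
    | _ f => simp [Quot.map]

/-- An object `Xπ` is a support of the state `π` iff it (co)represents the functor
`Y ↦ C(X, Y)/=_π`. -/
def IsSupport {X : C} (π : 𝟙_ C ⟶ X) (Xπ : C) : Prop :=
  Nonempty (coyoneda.obj (Opposite.op Xπ) ≅ QFunctor π)

lemma asEq_equivalence {X Y : C} (π : 𝟙_ C ⟶ X) :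
    Equivalence (fun f g : X ⟶ Y => AsEq π f g) :=
  ⟨fun _ => rfl, fun h => h.symm, fun h1 h2 => h1.trans h2⟩

lemma qmk_eq_qmk {X Y : C} {π : 𝟙_ C ⟶ X} {f g : X ⟶ Y} :
    (Quot.mk (fun f g : X ⟶ Y => AsEq π f g) f =
      Quot.mk (fun f g : X ⟶ Y => AsEq π f g) g) ↔ AsEq π f g := by
  rw [Quot.eq]
  exact (asEq_equivalence π).eqvGen_iff

/-- `Xπ` is a support of `π : I ⟶ X` iff there is a
section–retraction pair `i : Xπ ⟶ X`, `r : X ⟶ Xπ` such that for all `f g : X ⟶ Y`,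
`f =_π g ↔ i ≫ f = i ≫ g`. -/
theorem isSupport_iff_sectionRetraction {X : C} (π : 𝟙_ C ⟶ X) (Xπ : C) :
    IsSupport π Xπ ↔
      ∃ (i : Xπ ⟶ X) (r : X ⟶ Xπ), i ≫ r = 𝟙 Xπ ∧
        ∀ (Y : C) (f g : X ⟶ Y), AsEq π f g ↔ i ≫ f = i ≫ g := by
  constructor
  · rintro ⟨α⟩
    -- the section
    set i : Xπ ⟶ X := α.inv.app X (Quot.mk _ (𝟙 X)) with hi
    -- a representative of the retraction
    obtain ⟨r, hr⟩ := Quot.exists_rep (α.hom.app Xπ (𝟙 Xπ))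
    -- naturality of `α.inv`
    have hinv : ∀ (Y : C) (f : X ⟶ Y), α.inv.app Y (Quot.mk _ f) = i ≫ f := by
      intro Y f
      have := NatTrans.naturality_apply α.inv f (Quot.mk _ (𝟙 X))
      change α.inv.app Y (Quot.mk _ (𝟙 X ≫ f)) = α.inv.app X (Quot.mk _ (𝟙 X)) ≫ f at this
      rw [hi]
      simpa [QFunctor, Quot.map] using this
    -- naturality of `α.hom`
    have hhom : ∀ (Y : C) (k : Xπ ⟶ Y), α.hom.app Y k = Quot.mk _ (r ≫ k) := by
      intro Y k
      have := NatTrans.naturality_apply α.hom k (𝟙 Xπ)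
      change α.hom.app Y (𝟙 Xπ ≫ k) = (QFunctor π).map k (α.hom.app Xπ (𝟙 Xπ)) at this
      simp only [Category.id_comp] at this
      rw [this, ← hr]
      rfl
    -- round trips
    have hretr : i ≫ r = 𝟙 Xπ := by
      have : α.inv.app Xπ (α.hom.app Xπ (𝟙 Xπ)) = 𝟙 Xπ := α.hom_inv_id_app_apply Xπ _
      rw [← hr] at this
      rw [← this, hinv]
    have hsect : ∀ (Y : C) (f : X ⟶ Y), AsEq π (r ≫ (i ≫ f)) f := by
      intro Y f
      have : α.hom.app Y (α.inv.app Y (Quot.mk _ f)) = Quot.mk _ f := α.inv_hom_id_app_apply Y _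
      rw [hinv, hhom] at this
      exact qmk_eq_qmk.mp this
    refine ⟨i, r, hretr, fun Y f g => ⟨fun h => ?_, fun h => ?_⟩⟩
    · have := congrArg (α.inv.app Y) (qmk_eq_qmk.mpr h)
      rwa [hinv, hinv] at this
    · have h1 := hsect Y f
      have h2 := hsect Y g
      rw [h] at h1
      exact h1.symm.trans h2
  · rintro ⟨i, r, hir, hprop⟩
    refine ⟨⟨?_, ?_, ?_, ?_⟩⟩
    · exact
        { app := fun Y => TypeCat.ofHom (fun k => (Quot.mk _ (r ≫ k) : (QFunctor π).obj Y))
          naturality := fun Y Z k => by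
            ext x
            simp [QFunctor, Quot.map] }
    · exact
        { app := fun Y => TypeCat.ofHom (Quot.lift (fun f => i ≫ f)
            (fun f g h => (hprop Y f g).mp h) : (QFunctor π).obj Y → (Xπ ⟶ Y))
          naturality := fun Y Z k => by
            ext q
            induction q using Quot.ind with
            | _ f => simp [QFunctor, Quot.map] }
    · ext Y k
      change i ≫ r ≫ k = k
      rw [← Category.assoc, hir, Category.id_comp]
    · ext Y q
      induction q using Quot.ind with
      | _ f =>
        change Quot.mk _ (r ≫ i ≫ f) = Quot.mk _ f
        exact qmk_eq_qmk.mpr ((hprop Y _ f).mpr (by rw [← Category.assoc, ← Category.assoc, hir, Category.id_comp]))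

end MarkovCategory
end

section
/- Let π : I → X and f : X → Y in a Markov category with support objects X_π and Y_{π;f} (with sections i_π, i_{π;f} and retractions r_π, r_{π;f}). Then the map sending a Bayesian inverse-with-support g : Y_{π;f} → X_π to r_{π;f} ; g ; i_π, and the map sending an ordinary Bayesian inverse h : Y → X to i_{π;f} ; h ; r_π, establish a bijection between Bayesian inverses-with-support of f at π and (π;f)-almost-sure equivalence classes of ordinary Bayesian inverses of f at π. -/
open CategoryTheory MonoidalCategory

universe v u

namespace MarkovCategory

variable {C : Type u} [Category.{v} C] [MonoidalCategory C] [SymmetricCategory C] [_root_.MarkovCategory C]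

/-- Rotate a whiskered morphism through the copy map. -/
lemma copy_whiskerRight_eq' {X Z : C} (w : X ⟶ Z) :
    copy X ≫ (w ▷ X) = copy X ≫ (X ◁ w) ≫ (β_ X Z).hom := by
  conv_lhs => rw [← copy_comm X]
  rw [Category.assoc, ← BraidedCategory.braiding_naturality_right]

lemma copy_whiskerLeft_eq' {X Z : C} (w : X ⟶ Z) :
    copy X ≫ (X ◁ w) = copy X ≫ (w ▷ X) ≫ (β_ Z X).hom := by
  conv_lhs => rw [← copy_comm X]
  rw [Category.assoc, ← BraidedCategory.braiding_naturality_left]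

/-- Key computation: postcomposing a Bayesian inverse. -/
lemma bayesInv_post {X Y Z : C} {π : 𝟙_ C ⟶ X} {f : X ⟶ Y} {h : Y ⟶ X}
    (hb : BayesInv π f h) (w : X ⟶ Z) :
    π ≫ f ≫ copy Y ≫ (Y ◁ (h ≫ w)) =
      π ≫ copy X ≫ (X ◁ w) ≫ (β_ X Z).hom ≫ (Z ◁ f) ≫ (β_ Z Y).hom := by
  have step1 : copy Y ≫ (Y ◁ h) = copy Y ≫ (h ▷ Y) ≫ (β_ X Y).hom :=
    copy_whiskerLeft_eq' h
  calc π ≫ f ≫ copy Y ≫ (Y ◁ (h ≫ w))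
      = π ≫ f ≫ copy Y ≫ (Y ◁ h) ≫ (Y ◁ w) := by
        rw [MonoidalCategory.whiskerLeft_comp]
    _ = π ≫ f ≫ copy Y ≫ (h ▷ Y) ≫ (β_ X Y).hom ≫ (Y ◁ w) := by
        rw [reassoc_of% step1]
    _ = (π ≫ f ≫ copy Y ≫ (h ▷ Y)) ≫ (β_ X Y).hom ≫ (Y ◁ w) := by
        simp only [Category.assoc]
    _ = (π ≫ copy X ≫ (X ◁ f)) ≫ (β_ X Y).hom ≫ (Y ◁ w) := by
        rw [← hb]
    _ = π ≫ copy X ≫ (X ◁ f) ≫ (β_ X Y).hom ≫ (Y ◁ w) := by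
        simp only [Category.assoc]
    _ = π ≫ copy X ≫ (X ◁ f) ≫ (w ▷ Y) ≫ (β_ Z Y).hom := by
        rw [← BraidedCategory.braiding_naturality_left]
    _ = π ≫ copy X ≫ (w ▷ X) ≫ (Z ◁ f) ≫ (β_ Z Y).hom := by
        rw [← whisker_exchange_assoc]
    _ = π ≫ copy X ≫ (X ◁ w) ≫ (β_ X Z).hom ≫ (Z ◁ f) ≫ (β_ Z Y).hom := by
        rw [reassoc_of% (copy_whiskerRight_eq' (C := C) w)]

/-- A Bayesian inverse composed with `π`-a.s.-equal maps gives `(π≫f)`-a.s.-equal maps. -/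
lemma asEq_comp_of_bayesInv {X Y Z : C} {π : 𝟙_ C ⟶ X} {f : X ⟶ Y} {h : Y ⟶ X}
    (hb : BayesInv π f h) {u v : X ⟶ Z} (huv : AsEq π u v) :
    AsEq (π ≫ f) (h ≫ u) (h ≫ v) := by
  unfold AsEq at huv ⊢
  simp only [Category.assoc]
  rw [bayesInv_post hb u, bayesInv_post hb v]
  simp only [← Category.assoc] at huv ⊢
  rw [show (π ≫ copy X) ≫ X ◁ u = (π ≫ copy X) ≫ X ◁ v from huv]

/-- a.s. equality is preserved under postcomposition. -/
lemma asEq_comp_right {X Y Z : C} {π : 𝟙_ C ⟶ X} {u v : X ⟶ Y}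
    (huv : AsEq π u v) (w : Y ⟶ Z) : AsEq π (u ≫ w) (v ≫ w) := by
  unfold AsEq at huv ⊢
  simp only [MonoidalCategory.whiskerLeft_comp]
  simp only [← Category.assoc] at huv ⊢
  rw [huv]

/-- `BayesInv` is invariant under `(π ≫ f)`-a.s. equality. -/
lemma bayesInv_of_asEq {X Y : C} {π : 𝟙_ C ⟶ X} {f : X ⟶ Y} {h h' : Y ⟶ X}
    (hb : BayesInv π f h) (he : AsEq (π ≫ f) h h') : BayesInv π f h' := by
  unfold BayesInv at hb ⊢
  unfold AsEq at he
  have e1 : π ≫ f ≫ copy Y ≫ (h ▷ Y) = π ≫ f ≫ copy Y ≫ (h' ▷ Y) := by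
    rw [copy_whiskerRight_eq' h, copy_whiskerRight_eq' h']
    simp only [Category.assoc] at he
    simp only [← Category.assoc] at he ⊢
    rw [show ((π ≫ f) ≫ copy Y) ≫ Y ◁ h = ((π ≫ f) ≫ copy Y) ≫ Y ◁ h' from he]
  rw [hb, e1]

/-- Given support objects `Xπ` of `π` and `Yπf` of `π ≫ f`, the maps
`g ↦ r' ≫ g ≫ i` and `h ↦ i' ≫ h ≫ r` establish a bijection between Bayesian
inverses-with-support of `f` at `π` and `(π ≫ f)`-almost-sure equivalence classes of
ordinary Bayesian inverses of `f` at `π`. -/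
theorem bayesInv_with_support_bijection {X Y Xπ Yπf : C} (π : 𝟙_ C ⟶ X) (f : X ⟶ Y)
    (i : Xπ ⟶ X) (r : X ⟶ Xπ) (hir : i ≫ r = 𝟙 Xπ)
    (hsupp : ∀ (Z : C) (u v : X ⟶ Z), AsEq π u v ↔ i ≫ u = i ≫ v)
    (i' : Yπf ⟶ Y) (r' : Y ⟶ Yπf) (hir' : i' ≫ r' = 𝟙 Yπf)
    (hsupp' : ∀ (Z : C) (u v : Y ⟶ Z), AsEq (π ≫ f) u v ↔ i' ≫ u = i' ≫ v) :
    ∃ e : {g : Yπf ⟶ Xπ // BayesInv π f (r' ≫ g ≫ i)} ≃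
        Quot (fun h h' : {h : Y ⟶ X // BayesInv π f h} => AsEq (π ≫ f) h.1 h'.1),
      (∀ g : {g : Yπf ⟶ Xπ // BayesInv π f (r' ≫ g ≫ i)},
          e g = Quot.mk _ ⟨r' ≫ g.1 ≫ i, g.2⟩) ∧
      (∀ h : {h : Y ⟶ X // BayesInv π f h},
          (e.symm (Quot.mk _ h)).1 = i' ≫ h.1 ≫ r) := by
  -- `r ≫ i` is `π`-a.s. the identity
  have hri : AsEq π (r ≫ i) (𝟙 X) := by
    rw [hsupp]; rw [← Category.assoc, hir, Category.id_comp, Category.comp_id]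
  -- `r' ≫ i'` is `(π ≫ f)`-a.s. the identity
  have hri' : AsEq (π ≫ f) (r' ≫ i') (𝟙 Y) := by
    rw [hsupp']; rw [← Category.assoc, hir', Category.id_comp, Category.comp_id]
  -- key: for a Bayesian inverse h, `h ≫ r ≫ i` is `(π≫f)`-a.s. `h`
  have key : ∀ h : Y ⟶ X, BayesInv π f h → AsEq (π ≫ f) (h ≫ r ≫ i) h := by
    intro h hb
    have := asEq_comp_of_bayesInv hb hri
    simpa using this
  -- backward map yields Bayesian inverses
  have back_bayes : ∀ h : Y ⟶ X, BayesInv π f h →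
      BayesInv π f (r' ≫ (i' ≫ h ≫ r) ≫ i) := by
    intro h hb
    apply bayesInv_of_asEq hb
    have e1 : AsEq (π ≫ f) h (h ≫ r ≫ i) := (key h hb).symm
    have e2 : AsEq (π ≫ f) ((𝟙 Y) ≫ h ≫ r ≫ i) ((r' ≫ i') ≫ h ≫ r ≫ i) :=
      asEq_comp_right hri'.symm (h ≫ r ≫ i)
    simp only [Category.id_comp] at e2
    have : AsEq (π ≫ f) h ((r' ≫ i') ≫ h ≫ r ≫ i) := e1.trans e2
    simpa [Category.assoc] using this
  have mem : ∀ h : {h : Y ⟶ X // BayesInv π f h},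
      BayesInv π f (r' ≫ (i' ≫ h.1 ≫ r) ≫ i) := fun h => by
    have := back_bayes h.1 h.2
    simpa [Category.assoc] using this
  have sound : ∀ a b : {h : Y ⟶ X // BayesInv π f h}, AsEq (π ≫ f) a.1 b.1 →
      (⟨i' ≫ a.1 ≫ r, mem a⟩ : {g : Yπf ⟶ Xπ // BayesInv π f (r' ≫ g ≫ i)}) =
      ⟨i' ≫ b.1 ≫ r, mem b⟩ := by
    intro a b hab
    have : i' ≫ a.1 = i' ≫ b.1 := (hsupp' X a.1 b.1).mp hab
    simp only [Subtype.mk.injEq, ← Category.assoc, this]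
  refine ⟨⟨fun g => Quot.mk _ ⟨r' ≫ g.1 ≫ i, g.2⟩,
    Quot.lift (fun h => ⟨i' ≫ h.1 ≫ r, mem h⟩) sound,
    ?_, ?_⟩, ?_, ?_⟩
  · intro g
    apply Subtype.ext
    show i' ≫ (r' ≫ g.1 ≫ i) ≫ r = g.1
    rw [← Category.assoc, ← Category.assoc, ← Category.assoc, hir']
    simp [hir]
  · intro q
    induction q using Quot.ind with
    | _ h =>
      show Quot.mk _ (⟨r' ≫ (i' ≫ h.1 ≫ r) ≫ i, _⟩ :
        {h : Y ⟶ X // BayesInv π f h}) = Quot.mk _ h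
      apply Quot.sound
      show AsEq (π ≫ f) (r' ≫ (i' ≫ h.1 ≫ r) ≫ i) h.1
      have e2 : AsEq (π ≫ f) ((r' ≫ i') ≫ h.1 ≫ r ≫ i) ((𝟙 Y) ≫ h.1 ≫ r ≫ i) :=
        asEq_comp_right hri' (h.1 ≫ r ≫ i)
      simp only [Category.id_comp] at e2
      have e3 : AsEq (π ≫ f) (r' ≫ (i' ≫ h.1 ≫ r) ≫ i) (h.1 ≫ r ≫ i) := by
        simpa [Category.assoc] using e2
      exact e3.trans (key h.1 h.2)
  · intro g; rfl
  · intro h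
    simp only [Equiv.coe_fn_symm_mk]

end MarkovCategory
end

section
/- In a Markov category with support objects, the Bayesian inverse-with-support of f : X → Y at π : I → X, if it exists, is unique (not merely unique up to almost-sure equality). -/
open CategoryTheory MonoidalCategory

universe v u

namespace MarkovCategory

variable {C : Type u} [Category.{v} C] [MonoidalCategory C] [SymmetricCategory C] [_root_.MarkovCategory C]

/-- The Bayesian inverse-with-support of `f` at `π`, if it exists,
is unique on the nose. -/
theorem bayesInv_with_support_unique {X Y Xπ Yπf : C} (π : 𝟙_ C ⟶ X) (f : X ⟶ Y)
    (i : Xπ ⟶ X) (r : X ⟶ Xπ) (hir : i ≫ r = 𝟙 Xπ)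
    (hsupp : ∀ (Z : C) (u v : X ⟶ Z), AsEq π u v ↔ i ≫ u = i ≫ v)
    (i' : Yπf ⟶ Y) (r' : Y ⟶ Yπf) (hir' : i' ≫ r' = 𝟙 Yπf)
    (hsupp' : ∀ (Z : C) (u v : Y ⟶ Z), AsEq (π ≫ f) u v ↔ i' ≫ u = i' ≫ v)
    (g g' : Yπf ⟶ Xπ)
    (hg : BayesInv π f (r' ≫ g ≫ i)) (hg' : BayesInv π f (r' ≫ g' ≫ i)) :
    g = g' := by
  have key : ∀ h : Y ⟶ X,
      (π ≫ f) ≫ copy Y ≫ (Y ◁ h) =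
        (π ≫ f ≫ copy Y ≫ (h ▷ Y)) ≫ (β_ X Y).hom := by
    intro h
    have := copy_comm Y
    calc (π ≫ f) ≫ copy Y ≫ (Y ◁ h)
        = π ≫ f ≫ (copy Y ≫ (β_ Y Y).hom) ≫ (Y ◁ h) := by
          rw [copy_comm]; simp [Category.assoc]
      _ = (π ≫ f ≫ copy Y ≫ (h ▷ Y)) ≫ (β_ X Y).hom := by
          simp [Category.assoc, BraidedCategory.braiding_naturality_right,
            ← BraidedCategory.braiding_naturality_left]
  have has : AsEq (π ≫ f) (r' ≫ g ≫ i) (r' ≫ g' ≫ i) := by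
    unfold AsEq
    rw [key, key]
    simp only [Category.assoc]
    have e1 := congrArg (· ≫ (β_ X Y).hom) hg
    have e2 := congrArg (· ≫ (β_ X Y).hom) hg'
    simp only [Category.assoc] at e1 e2
    rw [← e1, e2]
  have h1 : i' ≫ r' ≫ g ≫ i = i' ≫ r' ≫ g' ≫ i := (hsupp' _ _ _).mp has
  have h1' : g ≫ i = g' ≫ i := by
    simpa [← Category.assoc, hir'] using h1
  have h2 := congrArg (· ≫ r) h1'
  simpa [Category.assoc, hir] using h2

end MarkovCategory
end

section
/- In a Markov category with all support objects and Bayesian inverses, Bayesian inversion-with-support is functorial: if f : X → Y and g : Y → Z have Bayesian inverses-with-support f^♯_π : Y_{π;f} → X_π and g^♯_{π;f} : Z_{π;f;g} → Y_{π;f}, then g^♯_{π;f} ; f^♯_π is the Bayesian inverse-with-support of f;g at π. Moreover the inverse-with-support of id_X at π is id_{X_π}. -/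
open CategoryTheory MonoidalCategory

universe v u

namespace MarkovCategory

variable (C : Type u) [Category.{v} C] [MonoidalCategory C] [SymmetricCategory C] [_root_.MarkovCategory C]

/-- A choice, for every state `π : I ⟶ X`, of a support object with a
section–retraction pair characterising `π`-almost-sure equality. -/
structure SupportChoice where
  sobj : ∀ {X : C}, (𝟙_ C ⟶ X) → C
  sec : ∀ {X : C} (π : 𝟙_ C ⟶ X), sobj π ⟶ X
  ret : ∀ {X : C} (π : 𝟙_ C ⟶ X), X ⟶ sobj π
  sec_ret : ∀ {X : C} (π : 𝟙_ C ⟶ X), sec π ≫ ret π = 𝟙 (sobj π)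
  asEq_iff : ∀ {X Y : C} (π : 𝟙_ C ⟶ X) (f g : X ⟶ Y),
    AsEq π f g ↔ sec π ≫ f = sec π ≫ g

variable {C}

/-- The restriction of `f : X ⟶ Y` to a morphism between supports `X_π ⟶ Y_{π ≫ f}`. -/
def SupportChoice.restr (S : SupportChoice C) {X Y : C} (π : 𝟙_ C ⟶ X) (f : X ⟶ Y) :
    S.sobj π ⟶ S.sobj (π ≫ f) :=
  S.sec π ≫ f ≫ S.ret (π ≫ f)

end MarkovCategory

namespace MarkovCategory

variable {C : Type u} [Category.{v} C] [MonoidalCategory C] [SymmetricCategory C] [_root_.MarkovCategory C]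

/-- Bayesian inversion-with-support is functorial: the
inverse-with-support of a composite is the composite (in reverse order) of the
inverses-with-support, and the inverse-with-support of `𝟙 X` at `π` is `𝟙 X_π`. -/
theorem bayesInv_with_support_functorial (S : SupportChoice C) :
    (∀ (X Y Z : C) (π : 𝟙_ C ⟶ X) (f : X ⟶ Y) (g : Y ⟶ Z)
      (f' : S.sobj (π ≫ f) ⟶ S.sobj π) (g' : S.sobj (π ≫ f ≫ g) ⟶ S.sobj (π ≫ f)),
      BayesInv π f (S.ret (π ≫ f) ≫ f' ≫ S.sec π) →
      BayesInv (π ≫ f) g (S.ret (π ≫ f ≫ g) ≫ g' ≫ S.sec (π ≫ f)) →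
      BayesInv π (f ≫ g) (S.ret (π ≫ f ≫ g) ≫ (g' ≫ f') ≫ S.sec π)) ∧
    (∀ (X : C) (π : 𝟙_ C ⟶ X),
      BayesInv π (𝟙 X) (S.ret π ≫ 𝟙 (S.sobj π) ≫ S.sec π)) := by
  constructor
  · intro X Y Z π f g f' g' hf hg
    unfold BayesInv at hf hg ⊢
    set F : Y ⟶ X := S.ret (π ≫ f) ≫ f' ≫ S.sec π with hF
    set G : Z ⟶ Y := S.ret (π ≫ f ≫ g) ≫ g' ≫ S.sec (π ≫ f) with hG
    have hGF : S.ret (π ≫ f ≫ g) ≫ (g' ≫ f') ≫ S.sec π = G ≫ F := by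
      simp [hF, hG, reassoc_of% S.sec_ret (π ≫ f)]
    rw [hGF]
    calc π ≫ copy X ≫ (X ◁ (f ≫ g))
        = (π ≫ copy X ≫ (X ◁ f)) ≫ (X ◁ g) := by
          simp [MonoidalCategory.whiskerLeft_comp]
      _ = (π ≫ f ≫ copy Y ≫ (F ▷ Y)) ≫ (X ◁ g) := by rw [hf]
      _ = π ≫ f ≫ copy Y ≫ (Y ◁ g) ≫ (F ▷ Z) := by
          simp [whisker_exchange]
      _ = ((π ≫ f) ≫ copy Y ≫ (Y ◁ g)) ≫ (F ▷ Z) := by simp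
      _ = ((π ≫ f) ≫ g ≫ copy Z ≫ (G ▷ Z)) ≫ (F ▷ Z) := by rw [hg]
      _ = π ≫ (f ≫ g) ≫ copy Z ≫ ((G ≫ F) ▷ Z) := by
          simp [MonoidalCategory.comp_whiskerRight]
  · intro X π
    unfold BayesInv
    have h : AsEq π (S.ret π ≫ S.sec π) (𝟙 X) := by
      rw [S.asEq_iff]
      simp [reassoc_of% S.sec_ret π]
    unfold AsEq at h
    have h2 : π ≫ copy X ≫ ((S.ret π ≫ S.sec π) ▷ X) = π ≫ copy X ≫ (𝟙 X ▷ X) := by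
      have e : ∀ (h' : X ⟶ X), π ≫ copy X ≫ (h' ▷ X)
          = (π ≫ copy X ≫ (X ◁ h')) ≫ (β_ X X).hom := by
        intro h'
        rw [Category.assoc, Category.assoc, BraidedCategory.braiding_naturality_right,
          ← Category.assoc (copy X), copy_comm]
      rw [e, e, h]
    simpa using h2.symm

end MarkovCategory
end

section
/- In a Markov category, if h : Y → X is a Bayesian inverse of f : X → Y at π : I → X and k : Z → Y is a Bayesian inverse of g : Y → Z at π;f : I → Y, then k ; h is a Bayesian inverse of f ; g at π. -/
open CategoryTheory MonoidalCategory

universe v u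

namespace MarkovCategory

variable {C : Type u} [Category.{v} C] [MonoidalCategory C] [SymmetricCategory C] [_root_.MarkovCategory C]

/-- Composites of Bayesian inverses are Bayesian inverses: if `h` is
a Bayesian inverse of `f` at `π` and `k` is a Bayesian inverse of `g` at `π ≫ f`,
then `k ≫ h` is a Bayesian inverse of `f ≫ g` at `π`. -/
theorem bayesInv_comp {X Y Z : C} (π : 𝟙_ C ⟶ X) (f : X ⟶ Y) (g : Y ⟶ Z)
    (h : Y ⟶ X) (k : Z ⟶ Y)
    (hf : BayesInv π f h) (hg : BayesInv (π ≫ f) g k) :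
    BayesInv π (f ≫ g) (k ≫ h) := by
  unfold BayesInv at *
  calc π ≫ copy X ≫ (X ◁ (f ≫ g))
      = (π ≫ copy X ≫ (X ◁ f)) ≫ (X ◁ g) := by
        simp [MonoidalCategory.whiskerLeft_comp]
    _ = (π ≫ f ≫ copy Y ≫ (h ▷ Y)) ≫ (X ◁ g) := by rw [hf]
    _ = (π ≫ f ≫ copy Y ≫ (Y ◁ g)) ≫ (h ▷ Z) := by
        simp [whisker_exchange]
    _ = ((π ≫ f) ≫ g ≫ copy Z ≫ (k ▷ Z)) ≫ (h ▷ Z) := by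
        rw [← Category.assoc π f, hg]
    _ = π ≫ (f ≫ g) ≫ copy Z ≫ ((k ≫ h) ▷ Z) := by
        simp [MonoidalCategory.comp_whiskerRight]

end MarkovCategory
end

section
/- In a Markov category, any two Bayesian inverses of f : X → Y at π : I → X are (π;f)-almost-surely equal. -/
open CategoryTheory MonoidalCategory

universe v u

namespace MarkovCategory

variable {C : Type u} [Category.{v} C] [MonoidalCategory C] [SymmetricCategory C] [_root_.MarkovCategory C]

/-- Any two Bayesian inverses of `f` at `π` are `(π ≫ f)`-almost-surely
equal. -/
theorem bayesInv_asEq_unique {X Y : C} (π : 𝟙_ C ⟶ X) (f : X ⟶ Y) (h h' : Y ⟶ X)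
    (hh : BayesInv π f h) (hh' : BayesInv π f h') : AsEq (π ≫ f) h h' := by
  unfold BayesInv at hh hh'
  unfold AsEq
  have e : ∀ k : Y ⟶ X, copy Y ≫ (Y ◁ k) = copy Y ≫ (k ▷ Y) ≫ (β_ X Y).hom := by
    intro k
    conv_lhs => rw [← copy_comm Y]
    rw [Category.assoc, BraidedCategory.braiding_naturality_left]
  rw [Category.assoc, Category.assoc, e h, e h']
  have key : π ≫ f ≫ copy Y ≫ (h ▷ Y) = π ≫ f ≫ copy Y ≫ (h' ▷ Y) := hh.symm.trans hh'
  simp only [← Category.assoc] at key ⊢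
  rw [key]

end MarkovCategory
end

section
/- In a Markov category with support objects and Bayesian inverses: for π : I → X, let C = copy_X and L : X⊗X → X the left marginal projection. Then the Bayesian inverses-with-support C^♯_π : (X⊗X)_{π;C} → X_π and L^♯_{π;C} : X_π → (X⊗X)_{π;C} satisfy L^♯_{π;C} ; C^♯_π = id_{X_π} and C^♯_π ; L^♯_{π;C} = id_{(X⊗X)_{π;C}}; hence (X⊗X)_{π;copy_X} ≅ X_π. -/
open CategoryTheory MonoidalCategory

universe v u

namespace MarkovCategory

variable {C : Type u} [Category.{v} C] [MonoidalCategory C] [SymmetricCategory C] [_root_.MarkovCategory C]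

/-- The left marginalisation map `X ⊗ X ⟶ X`. -/
def lmarg (X : C) : X ⊗ X ⟶ X := (X ◁ del X) ≫ (ρ_ X).hom

lemma copy_lmarg (X : C) : copy X ≫ lmarg X = 𝟙 X := by
  rw [lmarg, ← Category.assoc, copy_del_right]; simp

lemma copy_whiskerRight_braid {X B : C} (f : X ⟶ B) :
    copy X ≫ (f ▷ X) ≫ (β_ B X).hom = copy X ≫ (X ◁ f) := by
  rw [BraidedCategory.braiding_naturality_left, ← Category.assoc, copy_comm]

lemma copy_tensorHom_def (X : C) :
    copy X ≫ (copy X ⊗ₘ copy X) = copy X ≫ (copy X ▷ X) ≫ ((X ⊗ X) ◁ copy X) := by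
  rw [MonoidalCategory.tensorHom_def]

lemma copy_copy_tensorμ (X : C) :
    copy X ≫ (copy X ⊗ₘ copy X) ≫ tensorμ X X X X = copy X ≫ (copy X ⊗ₘ copy X) := by
  have hassoc := copy_assoc X
  have hinv : copy X ≫ (X ◁ copy X) ≫ (α_ X X X).inv = copy X ≫ (copy X ▷ X) := by
    rw [← Category.assoc, ← hassoc]; simp
  have hinner : copy X ≫ (X ◁ copy X) ≫ (α_ X X X).inv ≫ ((β_ X X).hom ▷ X) ≫
      (α_ X X X).hom = copy X ≫ (X ◁ copy X) := by
    slice_lhs 1 3 => rw [hinv]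
    slice_lhs 2 3 => rw [← comp_whiskerRight, copy_comm]
    rw [← hassoc]
  calc copy X ≫ (copy X ⊗ₘ copy X) ≫ tensorμ X X X X
      = copy X ≫ (copy X ▷ X) ≫ ((X ⊗ X) ◁ copy X) ≫ (α_ X X (X ⊗ X)).hom ≫
          (X ◁ (α_ X X X).inv) ≫ (X ◁ ((β_ X X).hom ▷ X)) ≫ (X ◁ (α_ X X X).hom) ≫
          (α_ X X (X ⊗ X)).inv := by
        rw [tensorμ, MonoidalCategory.tensorHom_def]; simp only [Category.assoc]
    _ = copy X ≫ (copy X ▷ X) ≫ (α_ X X X).hom ≫ (X ◁ (X ◁ copy X)) ≫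
          (X ◁ (α_ X X X).inv) ≫ (X ◁ ((β_ X X).hom ▷ X)) ≫ (X ◁ (α_ X X X).hom) ≫
          (α_ X X (X ⊗ X)).inv := by
        slice_lhs 3 4 => rw [associator_naturality_right]
        simp only [Category.assoc]
    _ = copy X ≫ (X ◁ (copy X ≫ (X ◁ copy X) ≫ (α_ X X X).inv ≫ ((β_ X X).hom ▷ X) ≫
          (α_ X X X).hom)) ≫ (α_ X X (X ⊗ X)).inv := by
        slice_lhs 1 3 => rw [hassoc]
        simp only [MonoidalCategory.whiskerLeft_comp, Category.assoc]
    _ = copy X ≫ (X ◁ copy X) ≫ (X ◁ (X ◁ copy X)) ≫ (α_ X X (X ⊗ X)).inv := by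
        rw [hinner]
        simp only [MonoidalCategory.whiskerLeft_comp, Category.assoc]
    _ = copy X ≫ (X ◁ copy X) ≫ (α_ X X X).inv ≫ ((X ⊗ X) ◁ copy X) := by
        congr 1
        rw [← associator_inv_naturality_right]
    _ = copy X ≫ (copy X ⊗ₘ copy X) := by
        slice_lhs 1 3 => rw [hinv]
        rw [MonoidalCategory.tensorHom_def]; simp only [Category.assoc]

lemma copy_copy (X : C) :
    copy X ≫ copy (X ⊗ X) = copy X ≫ (copy X ⊗ₘ copy X) := by
  rw [copy_tensor, copy_copy_tensorμ]

lemma E1 (X : C) :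
    copy X ≫ copy (X ⊗ X) ≫ ((X ⊗ X) ◁ lmarg X) = copy X ≫ (copy X ▷ X) := by
  rw [← Category.assoc, copy_copy, Category.assoc, ← id_tensorHom, tensorHom_comp_tensorHom,
    copy_lmarg, Category.comp_id, tensorHom_id]


/-- The Bayesian inverses-with-support of copy and of left
marginalisation are mutually inverse, so `(X ⊗ X)_{π ≫ copy X} ≅ X_π`. -/
theorem copy_support_iso {X Xπ XXc : C} (π : 𝟙_ C ⟶ X)
    (iπ : Xπ ⟶ X) (rπ : X ⟶ Xπ) (hirπ : iπ ≫ rπ = 𝟙 Xπ)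
    (hsuppπ : ∀ (W : C) (u v : X ⟶ W), AsEq π u v ↔ iπ ≫ u = iπ ≫ v)
    (iC : XXc ⟶ X ⊗ X) (rC : X ⊗ X ⟶ XXc) (hirC : iC ≫ rC = 𝟙 XXc)
    (hsuppC : ∀ (W : C) (u v : X ⊗ X ⟶ W),
      AsEq (π ≫ copy X) u v ↔ iC ≫ u = iC ≫ v)
    (Csharp : XXc ⟶ Xπ) (hC : BayesInv π (copy X) (rC ≫ Csharp ≫ iπ))
    (Lsharp : Xπ ⟶ XXc) (hL : BayesInv (π ≫ copy X) (lmarg X) (rπ ≫ Lsharp ≫ iC)) :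
    Lsharp ≫ Csharp = 𝟙 Xπ ∧ Csharp ≫ Lsharp = 𝟙 XXc ∧ Nonempty (XXc ≅ Xπ) := by
  rw [BayesInv] at hC hL
  have e1 : π ≫ copy X ≫ copy (X ⊗ X) ≫ ((X ⊗ X) ◁ lmarg X)
      = π ≫ copy X ≫ (copy X ▷ X) := by
    rw [← Category.assoc, ← Category.assoc, ← E1]
    simp only [Category.assoc]
  -- F1 : Lsharp ≫ iC = iπ ≫ copy X
  have hF1 : Lsharp ≫ iC = iπ ≫ copy X := by
    have e2 : π ≫ copy X ≫ lmarg X ≫ copy X ≫ ((rπ ≫ Lsharp ≫ iC) ▷ X)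
        = π ≫ copy X ≫ ((rπ ≫ Lsharp ≫ iC) ▷ X) := by
      rw [reassoc_of% (copy_lmarg X)]
    have hLw : π ≫ copy X ≫ ((rπ ≫ Lsharp ≫ iC) ▷ X) = π ≫ copy X ≫ (copy X ▷ X) := by
      simp only [Category.assoc] at hL e1 e2 ⊢
      rw [← e2, ← hL, e1]
    have hA : AsEq π (rπ ≫ Lsharp ≫ iC) (copy X) := by
      rw [AsEq, ← copy_whiskerRight_braid, ← copy_whiskerRight_braid (copy X)]
      simp only [← Category.assoc] at hLw ⊢
      rw [hLw]
    have h := (hsuppπ _ _ _).mp hA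
    rw [← Category.assoc, hirπ, Category.id_comp] at h
    exact h
  -- F2 : Csharp ≫ iπ = iC ≫ lmarg X
  have hF2 : Csharp ≫ iπ = iC ≫ lmarg X := by
    have hA : AsEq (π ≫ copy X) (rC ≫ Csharp ≫ iπ) (lmarg X) := by
      rw [AsEq]
      have l1 : copy (X ⊗ X) ≫ ((X ⊗ X) ◁ (rC ≫ Csharp ≫ iπ))
          = copy (X ⊗ X) ≫ ((rC ≫ Csharp ≫ iπ) ▷ (X ⊗ X)) ≫ (β_ X (X ⊗ X)).hom := by
        rw [copy_whiskerRight_braid]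
      rw [l1]
      simp only [Category.assoc] at hC e1 ⊢
      rw [← reassoc_of% hC, e1, BraidedCategory.braiding_naturality_right,
        reassoc_of% (copy_comm X)]
    have h := (hsuppC _ _ _).mp hA
    rw [← Category.assoc, hirC, Category.id_comp] at h
    exact h
  -- F5 : iC ≫ lmarg X ≫ copy X = iC
  have hF5 : iC ≫ lmarg X ≫ copy X = iC := by
    have hA : AsEq (π ≫ copy X) (lmarg X ≫ copy X) (𝟙 (X ⊗ X)) := by
      rw [AsEq, MonoidalCategory.whiskerLeft_comp, MonoidalCategory.whiskerLeft_id,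
        Category.comp_id]
      simp only [Category.assoc] at e1 ⊢
      rw [reassoc_of% e1, copy_copy, MonoidalCategory.tensorHom_def]
    have h := (hsuppC _ _ _).mp hA
    rw [Category.comp_id] at h
    exact h
  -- conclusions
  have g1 : Lsharp ≫ Csharp = 𝟙 Xπ := by
    have h : Lsharp ≫ Csharp ≫ iπ = iπ := by
      rw [hF2, ← Category.assoc, hF1, Category.assoc, copy_lmarg, Category.comp_id]
    have := congrArg (· ≫ rπ) h
    simpa [Category.assoc, hirπ] using this
  have g2 : Csharp ≫ Lsharp = 𝟙 XXc := by
    have h : Csharp ≫ Lsharp ≫ iC = iC := by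
      rw [hF1, ← Category.assoc, hF2, Category.assoc, hF5]
    have := congrArg (· ≫ rC) h
    simpa [Category.assoc, hirC] using this
  exact ⟨g1, g2, ⟨⟨Csharp, Lsharp, g2, g1⟩⟩⟩

end MarkovCategory
end

section
/- In a Markov category with support objects and Bayesian inverses, the defining-property intermediate identities for the copy-support isomorphism hold: L^♯_{π;C} ; i_{π;C} = i_π ; C and C^♯_π ; i_π = i_{π;C} ; L, where C = copy_X, L is left marginalisation, π : I → X, and i denotes support sections. -/
open CategoryTheory MonoidalCategory

universe v u

namespace MarkovCategory

variable {C : Type u} [Category.{v} C] [MonoidalCategory C] [SymmetricCategory C] [_root_.MarkovCategory C]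

section Aux

lemma struct1 (X : C) : ((X ⊗ X) ◁ (λ_ X).inv) ≫ tensorμ X X (𝟙_ C) X ≫ ((ρ_ X).hom ▷ (X ⊗ X)) =
    (α_ X X X).hom := by
  simp [tensorμ, braiding_tensorUnit_right, braiding_tensorUnit_left]; monoidal

lemma struct2 (X : C) : ((X ⊗ X) ◁ (ρ_ X).inv) ≫ tensorμ X X X (𝟙_ C) ≫ ((X ⊗ X) ◁ (ρ_ X).hom) =
    (α_ X X X).hom ≫ (X ◁ (β_ X X).hom) ≫ (α_ X X X).inv := by
  simp [tensorμ, braiding_tensorUnit_right, braiding_tensorUnit_left]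

lemma nat4 (X : C) (d : X ⟶ 𝟙_ C) :
    tensorμ X X X X ≫ ((X ⊗ X) ◁ (X ◁ d)) = ((X ⊗ X) ◁ (X ◁ d)) ≫ tensorμ X X X (𝟙_ C) := by
  have nat := tensorμ_natural (𝟙 X) (𝟙 X) (𝟙 X) d
  simpa using nat.symm

lemma nat3 (X : C) (d : X ⟶ 𝟙_ C) :
    tensorμ X X X X ≫ ((X ◁ d) ▷ (X ⊗ X)) = ((X ⊗ X) ◁ (d ▷ X)) ≫ tensorμ X X (𝟙_ C) X := by
  have nat := tensorμ_natural (𝟙 X) (𝟙 X) d (𝟙 X)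
  simpa using nat.symm

/-- Deleting the right output of the copied pair. -/
lemma copy_whiskerLeft_lmarg (X : C) :
    copy (X ⊗ X) ≫ ((X ⊗ X) ◁ lmarg X) =
      (copy X ▷ X) ≫ (α_ X X X).hom ≫ (X ◁ (β_ X X).hom) ≫ (α_ X X X).inv := by
  rw [lmarg, copy_tensor, MonoidalCategory.whiskerLeft_comp]
  simp only [Category.assoc]
  slice_lhs 2 3 => rw [nat4]
  slice_lhs 1 2 => rw [← id_tensorHom, tensorHom_comp_tensorHom, Category.comp_id, copy_del_right]
  rw [MonoidalCategory.tensorHom_def]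
  simp only [Category.assoc]
  rw [struct2]

/-- Deleting the right output of the first copy of the pair. -/
lemma copy_lmarg_whiskerRight (X : C) :
    copy (X ⊗ X) ≫ (lmarg X ▷ (X ⊗ X)) = (copy X ▷ X) ≫ (α_ X X X).hom := by
  rw [lmarg, copy_tensor, comp_whiskerRight]
  simp only [Category.assoc]
  slice_lhs 2 3 => rw [nat3]
  slice_lhs 1 2 => rw [← id_tensorHom, tensorHom_comp_tensorHom, Category.comp_id, copy_del_left]
  rw [MonoidalCategory.tensorHom_def]
  simp only [Category.assoc]
  rw [struct1]

/-- Almost-sure equality can be tested on the left leg of the copy. -/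
lemma asEq_iff_swap {X W : C} (π : 𝟙_ C ⟶ X) (u v : X ⟶ W) :
    AsEq π u v ↔ π ≫ copy X ≫ (u ▷ X) = π ≫ copy X ≫ (v ▷ X) := by
  have key : ∀ f : X ⟶ W,
      π ≫ copy X ≫ (f ▷ X) = (π ≫ copy X ≫ (X ◁ f)) ≫ (β_ X W).hom := by
    intro f
    simp only [Category.assoc]
    rw [BraidedCategory.braiding_naturality_right]
    slice_rhs 2 3 => rw [copy_comm]
  constructor
  · intro h
    rw [key u, key v]
    unfold AsEq at h
    rw [h]
  · intro h
    rw [key u, key v] at h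
    unfold AsEq
    exact (cancel_mono _).mp h

end Aux

/-- The intermediate identities for the copy-support isomorphism:
`Lsharp ≫ i_{π≫C} = i_π ≫ copy X` and `Csharp ≫ i_π = i_{π≫C} ≫ L`. -/
theorem copy_support_intermediate {X Xπ XXc : C} (π : 𝟙_ C ⟶ X)
    (iπ : Xπ ⟶ X) (rπ : X ⟶ Xπ) (hirπ : iπ ≫ rπ = 𝟙 Xπ)
    (hsuppπ : ∀ (W : C) (u v : X ⟶ W), AsEq π u v ↔ iπ ≫ u = iπ ≫ v)
    (iC : XXc ⟶ X ⊗ X) (rC : X ⊗ X ⟶ XXc) (hirC : iC ≫ rC = 𝟙 XXc)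
    (hsuppC : ∀ (W : C) (u v : X ⊗ X ⟶ W),
      AsEq (π ≫ copy X) u v ↔ iC ≫ u = iC ≫ v)
    (Csharp : XXc ⟶ Xπ) (hC : BayesInv π (copy X) (rC ≫ Csharp ≫ iπ))
    (Lsharp : Xπ ⟶ XXc) (hL : BayesInv (π ≫ copy X) (lmarg X) (rπ ≫ Lsharp ≫ iC)) :
    Lsharp ≫ iC = iπ ≫ copy X ∧ Csharp ≫ iπ = iC ≫ lmarg X := by
  constructor
  · -- Goal 1 : Lsharp ≫ iC = iπ ≫ copy X
    have hAs : AsEq π (rπ ≫ Lsharp ≫ iC) (copy X) := by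
      rw [asEq_iff_swap]
      have hL' := hL
      unfold BayesInv at hL'
      have lhs : (π ≫ copy X) ≫ copy (X ⊗ X) ≫ ((X ⊗ X) ◁ lmarg X) =
          π ≫ copy X ≫ (copy X ▷ X) := by
        rw [copy_whiskerLeft_lmarg]
        simp only [Category.assoc]
        slice_lhs 2 4 => rw [copy_assoc]
        slice_lhs 3 4 => rw [← MonoidalCategory.whiskerLeft_comp, copy_comm]
        slice_lhs 2 3 => rw [← copy_assoc]
        simp
      have rhs : (π ≫ copy X) ≫ lmarg X ≫ copy X ≫ ((rπ ≫ Lsharp ≫ iC) ▷ X) =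
          π ≫ copy X ≫ ((rπ ≫ Lsharp ≫ iC) ▷ X) := by
        rw [Category.assoc, ← Category.assoc (copy X) (lmarg X), copy_lmarg]
        simp
      rw [rhs, lhs] at hL'
      exact hL'.symm
    have h1 := (hsuppπ _ _ _).mp hAs
    rw [← Category.assoc, hirπ, Category.id_comp] at h1
    exact h1
  · -- Goal 2 : Csharp ≫ iπ = iC ≫ lmarg X
    have hAs : AsEq (π ≫ copy X) (rC ≫ Csharp ≫ iπ) (lmarg X) := by
      rw [asEq_iff_swap]
      have hC' := hC
      unfold BayesInv at hC'
      have lhs : (π ≫ copy X) ≫ copy (X ⊗ X) ≫ (lmarg X ▷ (X ⊗ X)) =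
          π ≫ copy X ≫ (X ◁ copy X) := by
        rw [copy_lmarg_whiskerRight]
        simp only [Category.assoc]
        slice_lhs 2 4 => rw [copy_assoc]
      rw [lhs]
      simp only [Category.assoc]
      exact hC'.symm
    have h2 := (hsuppC _ _ _).mp hAs
    rw [← Category.assoc, hirC, Category.id_comp] at h2
    exact h2

end MarkovCategory
end

section
/- In the Kleisli category FinStoch of finitely supported probability distributions on finite sets (finite stochastic matrices), every state π : I → X (probability distribution on the finite set X) admits a support object, given by the subset supp(π) = {x ∈ X : π(x) > 0} with section the inclusion-as-point-mass stochastic map and retraction any stochastic map restricting to the identity on supp(π). -/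
open CategoryTheory

/-- The Markov category `FinStoch`: objects are finite sets and morphisms are
finite stochastic matrices, i.e. functions into (finitely supported) probability
distributions, composed by matrix multiplication (Kleisli composition for `PMF`). -/
structure FinStoch where
  carrier : Type
  [fin : Fintype carrier]

attribute [instance] FinStoch.fin

instance : CoeSort FinStoch Type := ⟨FinStoch.carrier⟩

noncomputable instance : Category FinStoch where
  Hom X Y := X → PMF Y
  id X := fun x => PMF.pure x
  comp f g := fun x => (f x).bind g
  id_comp f := by funext x; exact PMF.pure_bind x f
  comp_id f := by funext x; exact PMF.bind_pure (f x)
  assoc f g h := by funext x; exact PMF.bind_bind (f x) g h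

/-- `π'`-almost-sure equality in `FinStoch`: `f` and `g` agree at every point in the
support of `π`. -/
def FinStoch.AsEq {X Y : FinStoch} (π : PMF X) (f g : X ⟶ Y) : Prop :=
  ∀ x : X, π x ≠ 0 → f x = g x

/-- The subset `supp(π) = {x : π x > 0}` as an object of `FinStoch`. -/
noncomputable def FinStoch.suppObj (X : FinStoch) (π : PMF X) : FinStoch :=
  letI : DecidablePred (fun x : X => π x ≠ 0) := Classical.decPred _
  ⟨{x : X // π x ≠ 0}⟩

/-- The inclusion-as-point-mass stochastic map `supp(π) ⟶ X`. -/
noncomputable def FinStoch.incl (X : FinStoch) (π : PMF X) : X.suppObj π ⟶ X :=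
  fun s => PMF.pure s.1

/-- In `FinStoch`, every distribution `π` on a finite set `X` admits
a support object, given by `supp(π) = {x : π x > 0}`, with section the
inclusion-as-point-mass map and retraction any stochastic map restricting to the
identity on `supp(π)`: such retractions exist, and any of them makes `(incl, r)` a
section–retraction pair characterising `π`-almost-sure equality. -/
theorem finStoch_support_exists (X : FinStoch) (π : PMF X) :
    (∃ r : X ⟶ X.suppObj π, ∀ (x : X) (h : π x ≠ 0), r x = PMF.pure ⟨x, h⟩) ∧
    (∀ r : X ⟶ X.suppObj π, (∀ (x : X) (h : π x ≠ 0), r x = PMF.pure ⟨x, h⟩) →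
      X.incl π ≫ r = 𝟙 (X.suppObj π) ∧
      ∀ (Y : FinStoch) (f g : X ⟶ Y),
        FinStoch.AsEq π f g ↔ X.incl π ≫ f = X.incl π ≫ g) := by
  have hne : Nonempty (X.suppObj π) := by
    obtain ⟨x, hx⟩ := π.support_nonempty
    exact ⟨⟨x, hx⟩⟩
  classical
  constructor
  · refine ⟨fun x => if h : π x ≠ 0 then PMF.pure ⟨x, h⟩ else PMF.pure hne.some, ?_⟩
    intro x h
    simp [h]
  · intro r hr
    have hcomp : X.incl π ≫ r = 𝟙 (X.suppObj π) := by
      funext s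
      show (PMF.pure s.1).bind r = PMF.pure s
      rw [PMF.pure_bind, hr s.1 s.2]
      rfl
    refine ⟨hcomp, fun Y f g => ⟨?_, ?_⟩⟩
    · intro hfg
      funext s
      show (PMF.pure s.1).bind f = (PMF.pure s.1).bind g
      rw [PMF.pure_bind, PMF.pure_bind, hfg s.1 s.2]
    · intro h x hx
      have := congrFun h ⟨x, hx⟩
      simpa [CategoryStruct.comp, FinStoch.incl, PMF.pure_bind] using this
end
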